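/- Under the reality and Hamiltonian conditions on coefficients, the Lie bracket of the paired homogeneous operators satisfies [B_{(k-1,r-k)}, B_{(r-k,k-1)}] = (r(r+1)(2k−r−1)/(r−k+1)²) · |p_{k-1,r-k}|² · (xy)^{r-1}(x∂_x − y∂_y), for k = 1,...,r. -/
import Mathlib

open MvPolynomial
set_option maxHeartbeats 2000000

/-- Planar polynomial vector fields: a pair `(A₁, A₂)` represents `A₁ ∂_x + A₂ ∂_y`. -/
abbrev PlanarVF := MvPolynomial (Fin 2) ℂ × MvPolynomial (Fin 2) ℂ

/-- The Lie bracket `[A,B] = A∘B − B∘A` of derivations, in components. -/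
noncomputable def lieVF (A B : PlanarVF) : PlanarVF :=
  (A.1 * pderiv 0 B.1 + A.2 * pderiv 1 B.1 - B.1 * pderiv 0 A.1 - B.2 * pderiv 1 A.1,
   A.1 * pderiv 0 B.2 + A.2 * pderiv 1 B.2 - B.1 * pderiv 0 A.2 - B.2 * pderiv 1 A.2)

/-- The homogeneous differential operator `B_n = x^{n¹} y^{n²} (p x∂_x + q y∂_y)`. -/
noncomputable def Bop (n1 n2 : ℕ) (p q : ℂ) : PlanarVF :=
  (C p * X 0 ^ (n1 + 1) * X 1 ^ n2, C q * X 0 ^ n1 * X 1 ^ (n2 + 1))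

lemma pd0' (p : ℂ) (m n : ℕ) :
    pderiv 0 (C p * X 0 ^ (m+1) * X 1 ^ n : MvPolynomial (Fin 2) ℂ)
      = C (p*(m+1)) * X 0 ^ m * X 1 ^ n := by
  simp [pderiv_mul, pderiv_pow, pderiv_X_self, pderiv_X_of_ne (show (1:Fin 2) ≠ 0 by decide)]
  ring

lemma pd1' (p : ℂ) (m n : ℕ) :
    pderiv 1 (C p * X 0 ^ m * X 1 ^ (n+1) : MvPolynomial (Fin 2) ℂ)
      = C (p*(n+1)) * X 0 ^ m * X 1 ^ n := by
  simp [pderiv_mul, pderiv_pow, pderiv_X_self, pderiv_X_of_ne (show (0:Fin 2) ≠ 1 by decide)]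
  ring

/-- Under the reality condition (`q_{k-1,r-k} = conj(p_{r-k,k-1})`) and the Hamiltonian
condition `p_{k-1,r-k} = −((r−k+1)/k)·conj(p_{r-k,k-1})`, the Lie bracket of the paired
homogeneous operators satisfies
`[B_{(k-1,r-k)}, B_{(r-k,k-1)}]
   = (r(r+1)(2k−r−1)/(r−k+1)²)·|p_{k-1,r-k}|²·(xy)^{r-1}(x∂_x − y∂_y)`.
Here `a = p_{k-1,r-k}` and `b = p_{r-k,k-1}`. -/
theorem lie_bracket_paired_ops (r k : ℕ) (hk1 : 1 ≤ k) (hkr : k ≤ r)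
    (a b : ℂ) (hham : a = -(((r : ℂ) - k + 1) / k) * starRingEnd ℂ b) :
    lieVF (Bop (k - 1) (r - k) a (starRingEnd ℂ b))
        (Bop (r - k) (k - 1) b (starRingEnd ℂ a)) =
      (C ((r : ℂ) * ((r : ℂ) + 1) * (2 * (k : ℂ) - r - 1) / ((r : ℂ) - k + 1) ^ 2 *
            (Complex.normSq a : ℂ)) * X 0 ^ r * X 1 ^ (r - 1),
       -(C ((r : ℂ) * ((r : ℂ) + 1) * (2 * (k : ℂ) - r - 1) / ((r : ℂ) - k + 1) ^ 2 *
            (Complex.normSq a : ℂ))) * X 0 ^ (r - 1) * X 1 ^ r) := by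
  obtain ⟨j, rfl⟩ : ∃ j, k = j + 1 := ⟨k - 1, by omega⟩
  obtain ⟨i, rfl⟩ : ∃ i, r = j + 1 + i := ⟨r - (j + 1), by omega⟩
  have h1 : ((j:ℂ)+1) ≠ 0 := Nat.cast_add_one_ne_zero j
  have h2 : ((i:ℂ)+1) ≠ 0 := Nat.cast_add_one_ne_zero i
  simp only [show j+1-1 = j from rfl, show j+1+i-(j+1) = i by omega,
    show j+1+i-1 = i+j by omega] at hham ⊢
  simp only [show j+1+i = i+j+1 by omega] at hham ⊢
  set cR : ℂ := (↑(i+j+1) : ℂ) * ((↑(i+j+1):ℂ) + 1) * (2 * ((↑(j+1):ℂ)) - ↑(i+j+1) - 1) /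
      ((↑(i+j+1):ℂ) - ↑(j+1) + 1) ^ 2 * (Complex.normSq a : ℂ) with hcR
  have hc1 : a*(b*((i:ℂ)+1)) + starRingEnd ℂ b*(b*(j:ℂ)) - b*(a*((j:ℂ)+1))
      - starRingEnd ℂ a*(a*(i:ℂ)) = cR := by
    rw [hcR, ← Complex.mul_conj a]
    subst hham
    push_cast
    simp only [map_mul, map_neg, map_div₀, map_add, map_sub, map_one, map_ofNat,
      Complex.conj_conj, map_natCast]
    field_simp
    ring
  have hc2 : a*(starRingEnd ℂ a*(i:ℂ)) + starRingEnd ℂ b*(starRingEnd ℂ a*((j:ℂ)+1))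
      - b*(starRingEnd ℂ b*(j:ℂ)) - starRingEnd ℂ a*(starRingEnd ℂ b*((i:ℂ)+1)) = -cR := by
    rw [hcR, ← Complex.mul_conj a]
    subst hham
    push_cast
    simp only [map_mul, map_neg, map_div₀, map_add, map_sub, map_one, map_ofNat,
      Complex.conj_conj, map_natCast]
    field_simp
    ring
  have t11 : C a * X 0 ^ (j+1) * X 1 ^ i *
      pderiv 0 (C b * X 0 ^ (i+1) * X 1 ^ j : MvPolynomial (Fin 2) ℂ)
      = C (a*(b*((i:ℂ)+1))) * X 0 ^ (i+j+1) * X 1 ^ (i+j) := by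
    rw [pd0']; push_cast [map_mul]; ring
  have t12 : C (starRingEnd ℂ b) * X 0 ^ j * X 1 ^ (i+1) *
      pderiv 1 (C b * X 0 ^ (i+1) * X 1 ^ j : MvPolynomial (Fin 2) ℂ)
      = C (starRingEnd ℂ b*(b*(j:ℂ))) * X 0 ^ (i+j+1) * X 1 ^ (i+j) := by
    cases j with
    | zero => simp [pderiv_mul, pderiv_X_of_ne (show (0:Fin 2) ≠ 1 by decide)]
    | succ s => rw [pd1']; push_cast [map_mul]; ring
  have t13 : C b * X 0 ^ (i+1) * X 1 ^ j *
      pderiv 0 (C a * X 0 ^ (j+1) * X 1 ^ i : MvPolynomial (Fin 2) ℂ)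
      = C (b*(a*((j:ℂ)+1))) * X 0 ^ (i+j+1) * X 1 ^ (i+j) := by
    rw [pd0']; push_cast [map_mul]; ring
  have t14 : C (starRingEnd ℂ a) * X 0 ^ i * X 1 ^ (j+1) *
      pderiv 1 (C a * X 0 ^ (j+1) * X 1 ^ i : MvPolynomial (Fin 2) ℂ)
      = C (starRingEnd ℂ a*(a*(i:ℂ))) * X 0 ^ (i+j+1) * X 1 ^ (i+j) := by
    cases i with
    | zero => simp [pderiv_mul, pderiv_X_of_ne (show (0:Fin 2) ≠ 1 by decide)]
    | succ s => rw [pd1']; push_cast [map_mul]; ring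
  have t21 : C a * X 0 ^ (j+1) * X 1 ^ i *
      pderiv 0 (C (starRingEnd ℂ a) * X 0 ^ i * X 1 ^ (j+1) : MvPolynomial (Fin 2) ℂ)
      = C (a*(starRingEnd ℂ a*(i:ℂ))) * X 0 ^ (i+j) * X 1 ^ (i+j+1) := by
    cases i with
    | zero => simp [pderiv_mul, pderiv_X_of_ne (show (1:Fin 2) ≠ 0 by decide)]
    | succ s => rw [pd0']; push_cast [map_mul]; ring
  have t22 : C (starRingEnd ℂ b) * X 0 ^ j * X 1 ^ (i+1) *
      pderiv 1 (C (starRingEnd ℂ a) * X 0 ^ i * X 1 ^ (j+1) : MvPolynomial (Fin 2) ℂ)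
      = C (starRingEnd ℂ b*(starRingEnd ℂ a*((j:ℂ)+1))) * X 0 ^ (i+j) * X 1 ^ (i+j+1) := by
    rw [pd1']; push_cast [map_mul]; ring
  have t23 : C b * X 0 ^ (i+1) * X 1 ^ j *
      pderiv 0 (C (starRingEnd ℂ b) * X 0 ^ j * X 1 ^ (i+1) : MvPolynomial (Fin 2) ℂ)
      = C (b*(starRingEnd ℂ b*(j:ℂ))) * X 0 ^ (i+j) * X 1 ^ (i+j+1) := by
    cases j with
    | zero => simp [pderiv_mul, pderiv_X_of_ne (show (1:Fin 2) ≠ 0 by decide)]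
    | succ s => rw [pd0']; push_cast [map_mul]; ring
  have t24 : C (starRingEnd ℂ a) * X 0 ^ i * X 1 ^ (j+1) *
      pderiv 1 (C (starRingEnd ℂ b) * X 0 ^ j * X 1 ^ (i+1) : MvPolynomial (Fin 2) ℂ)
      = C (starRingEnd ℂ a*(starRingEnd ℂ b*((i:ℂ)+1))) * X 0 ^ (i+j) * X 1 ^ (i+j+1) := by
    rw [pd1']; push_cast [map_mul]; ring
  have hC1 : (C (a*(b*((i:ℂ)+1))) + C (starRingEnd ℂ b*(b*(j:ℂ))) - C (b*(a*((j:ℂ)+1)))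
      - C (starRingEnd ℂ a*(a*(i:ℂ))) : MvPolynomial (Fin 2) ℂ) = C cR := by
    rw [← map_add, ← map_sub, ← map_sub, hc1]
  have hC2 : (C (a*(starRingEnd ℂ a*(i:ℂ))) + C (starRingEnd ℂ b*(starRingEnd ℂ a*((j:ℂ)+1)))
      - C (b*(starRingEnd ℂ b*(j:ℂ)))
      - C (starRingEnd ℂ a*(starRingEnd ℂ b*((i:ℂ)+1))) : MvPolynomial (Fin 2) ℂ)
      = -C cR := by
    rw [← map_add, ← map_sub, ← map_sub, hc2, map_neg]
  simp only [lieVF, Bop]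
  refine Prod.ext ?_ ?_
  · show _ = C cR * X 0 ^ (i+j+1) * X 1 ^ (i+j)
    rw [t11, t12, t13, t14]
    linear_combination (X 0 ^ (i+j+1) * X 1 ^ (i+j) : MvPolynomial (Fin 2) ℂ) * hC1
  · show _ = -(C cR) * X 0 ^ (i+j) * X 1 ^ (i+j+1)
    rw [t21, t22, t23, t24]
    linear_combination (X 0 ^ (i+j) * X 1 ^ (i+j+1) : MvPolynomial (Fin 2) ℂ) * hC2
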